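/- Let K be a field containing a primitive q-th root of unity, q prime, and let v be a valuation on K whose residue field has characteristic different from q. If a ∈ K satisfies a^q = b and v(b - 1) > γ for some non-negative q-divisible γ in the value group, then there exists j ∈ {0,…,q-1} such that v(a - ξ_q^j) > γ/q, where ξ_q is the primitive q-th root of unity. -/
import Mathlib

/-- Let `K` be a field containing a primitive `q`-th root of unity `ξ` (`q` prime) and
`v` a valuation on `K` whose residue field has characteristic `≠ q` (in Mathlib's
multiplicative convention: `v q = 1`). If `a ∈ K` satisfies `a ^ q = b` and
`v(b - 1) > γ` for a non-negative `q`-divisible `γ` in the value group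
(multiplicatively: `v (b - 1) < γ` with `γ ≤ 1`, `γ ≠ 0`, `γ = δ ^ q`), then there
exists `j ∈ {0,…,q-1}` with `v (a - ξ^j) > γ/q` (multiplicatively `v (a - ξ^j) < δ`). -/
theorem stmt_1 {K : Type*} [Field K] {Γ : Type*} [LinearOrderedCommGroupWithZero Γ]
    (v : Valuation K Γ) (q : ℕ) (hq : q.Prime)
    (hres : v (q : K) = 1)
    (ξ : K) (hξ : IsPrimitiveRoot ξ q)
    (γ δ : Γ) (hγ1 : γ ≤ 1) (hγ0 : γ ≠ 0) (hδ : δ ^ q = γ)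
    (a b : K) (hab : a ^ q = b) (hb : v (b - 1) < γ) :
    ∃ j : ℕ, j < q ∧ v (a - ξ ^ j) < δ := by
  have hqpos : 0 < q := hq.pos
  have hfact : a ^ q - 1 = ∏ i ∈ Finset.range q, (a - ξ ^ i) := by
    have h := X_pow_sub_C_eq_prod hξ hqpos (one_pow q)
    have := congrArg (Polynomial.eval a) h
    simpa [Polynomial.eval_prod, mul_one] using this
  have hv : ∏ i ∈ Finset.range q, v (a - ξ ^ i) < δ ^ q := by
    rw [← map_prod, ← hfact, hab, hδ]
    exact hb
  by_contra h
  push_neg at h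
  have hge : δ ^ q ≤ ∏ i ∈ Finset.range q, v (a - ξ ^ i) := by
    have hδ0 : δ ≠ 0 := by
      intro h0; apply hγ0; rw [← hδ, h0, zero_pow hqpos.ne']
    calc δ ^ q = ∏ _i ∈ Finset.range q, δ := by
          rw [Finset.prod_const, Finset.card_range]
      _ ≤ ∏ i ∈ Finset.range q, v (a - ξ ^ i) := by
          apply Finset.prod_le_prod' fun i hi => h i (Finset.mem_range.mp hi)
  exact absurd hv (not_lt.mpr hge)
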